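/- arXiv:1801.02856 — 2 statements merged into one kernel-verified Lean document; each statement's English description precedes it below -/
import Mathlib

section
/- Let a > 0 and p ∈ ℝ. There exists a constant K > 0, depending only on a and p, such that the following holds: for every bounded continuous function c : [0,1]×[0,∞) → ℝ and every pair of continuously differentiable functions w, u : [0,1]×[0,∞) → ℝ satisfying ∂_t w + a ∂_x w = u and ∂_t u − a ∂_x u + c·w = 0 on (0,1)×(0,∞), together with the boundary conditions w(0,t) = p·u(0,t) and u(1,t) = 0 for all t > 0, the function W(t) := (∫_0^1 w(x,t)² dx)^{1/2} satisfies W(t) ≤ K · (sup_{(x,s)} |c(x,s)|) · ∫_{t−4/a}^{t} W(τ) dτ for every t > 4/a. -/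
open MeasureTheory intervalIntegral Set

set_option maxHeartbeats 1000000

lemma hasDerivAt_line (f : ℝ → ℝ → ℝ)
    (hf : ContDiff ℝ 1 (fun q : ℝ × ℝ => f q.1 q.2)) (x₀ t₀ v₁ v₂ s : ℝ) :
    HasDerivAt (fun s => f (x₀ + v₁ * s) (t₀ + v₂ * s))
      (v₁ * deriv (fun y => f y (t₀ + v₂ * s)) (x₀ + v₁ * s)
        + v₂ * deriv (f (x₀ + v₁ * s)) (t₀ + v₂ * s)) s := by
  set F : ℝ × ℝ → ℝ := fun q => f q.1 q.2 with hF
  set X := x₀ + v₁ * s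
  set T := t₀ + v₂ * s
  have hdF : HasFDerivAt F (fderiv ℝ F (X, T)) (X, T) :=
    (hf.differentiable one_ne_zero (X, T)).hasFDerivAt
  have hγ : HasDerivAt (fun s : ℝ => ((x₀ + v₁ * s, t₀ + v₂ * s) : ℝ × ℝ)) (v₁, v₂) s := by
    have := HasDerivAt.prodMk (((hasDerivAt_id s).const_mul v₁).const_add x₀)
      (((hasDerivAt_id s).const_mul v₂).const_add t₀)
    simpa using this
  have hcomp := hdF.comp_hasDerivAt s hγ
  have h1 : HasDerivAt (fun y => f y T) (fderiv ℝ F (X, T) (1, 0)) X := by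
    have hc : HasDerivAt (fun y : ℝ => ((y, T) : ℝ × ℝ)) ((1 : ℝ), (0 : ℝ)) X :=
      HasDerivAt.prodMk (hasDerivAt_id X) (hasDerivAt_const X T)
    exact hdF.comp_hasDerivAt X hc
  have h2 : HasDerivAt (f X) (fderiv ℝ F (X, T) (0, 1)) T := by
    have hc : HasDerivAt (fun y : ℝ => ((X, y) : ℝ × ℝ)) ((0 : ℝ), (1 : ℝ)) T :=
      HasDerivAt.prodMk (hasDerivAt_const T X) (hasDerivAt_id T)
    exact hdF.comp_hasDerivAt T hc
  have e1 : deriv (fun y => f y T) X = fderiv ℝ F (X, T) (1, 0) := h1.deriv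
  have e2 : deriv (f X) T = fderiv ℝ F (X, T) (0, 1) := h2.deriv
  have e3 : fderiv ℝ F (X, T) (v₁, v₂)
      = v₁ * fderiv ℝ F (X, T) (1, 0) + v₂ * fderiv ℝ F (X, T) (0, 1) := by
    have : ((v₁, v₂) : ℝ × ℝ) = v₁ • ((1 : ℝ), (0 : ℝ)) + v₂ • ((0 : ℝ), (1 : ℝ)) := by
      simp [Prod.ext_iff]
    rw [this, map_add, (fderiv ℝ F (X, T)).map_smul, (fderiv ℝ F (X, T)).map_smul]
    simp [smul_eq_mul]
  rw [e1, e2, ← e3]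
  exact hcomp

lemma hasDerivAt_partial_t (f : ℝ → ℝ → ℝ)
    (hf : ContDiff ℝ 1 (fun q : ℝ × ℝ => f q.1 q.2)) (X T : ℝ) :
    HasDerivAt (f X) (fderiv ℝ (fun q : ℝ × ℝ => f q.1 q.2) (X, T) (0, 1)) T := by
  have hdF : HasFDerivAt (fun q : ℝ × ℝ => f q.1 q.2)
      (fderiv ℝ (fun q : ℝ × ℝ => f q.1 q.2) (X, T)) (X, T) :=
    (hf.differentiable one_ne_zero (X, T)).hasFDerivAt
  have hc : HasDerivAt (fun y : ℝ => ((X, y) : ℝ × ℝ)) ((0 : ℝ), (1 : ℝ)) T :=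
    HasDerivAt.prodMk (hasDerivAt_const T X) (hasDerivAt_id T)
  exact hdF.comp_hasDerivAt T hc

/-- Partial derivative in the first variable. -/

lemma hasDerivAt_partial_x (f : ℝ → ℝ → ℝ)
    (hf : ContDiff ℝ 1 (fun q : ℝ × ℝ => f q.1 q.2)) (X T : ℝ) :
    HasDerivAt (fun y => f y T) (fderiv ℝ (fun q : ℝ × ℝ => f q.1 q.2) (X, T) (1, 0)) X := by
  have hdF : HasFDerivAt (fun q : ℝ × ℝ => f q.1 q.2)
      (fderiv ℝ (fun q : ℝ × ℝ => f q.1 q.2) (X, T)) (X, T) :=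
    (hf.differentiable one_ne_zero (X, T)).hasFDerivAt
  have hc : HasDerivAt (fun y : ℝ => ((y, T) : ℝ × ℝ)) ((1 : ℝ), (0 : ℝ)) X :=
    HasDerivAt.prodMk (hasDerivAt_id X) (hasDerivAt_const X T)
  exact hdF.comp_hasDerivAt X hc

lemma cs_interval {α β : ℝ} (hab : α ≤ β) (f g : ℝ → ℝ)
    (hf : Continuous f) (hg : Continuous g) :
    (∫ x in α..β, f x * g x)
      ≤ Real.sqrt (∫ x in α..β, (f x) ^ 2) * Real.sqrt (∫ x in α..β, (g x) ^ 2) := by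
  set A := ∫ x in α..β, (f x) ^ 2 with hA
  set C := ∫ x in α..β, (g x) ^ 2 with hC
  set B := ∫ x in α..β, f x * g x with hB
  have hAnn : 0 ≤ A := intervalIntegral.integral_nonneg hab (fun x _ => sq_nonneg _)
  have hCnn : 0 ≤ C := intervalIntegral.integral_nonneg hab (fun x _ => sq_nonneg _)
  have key : ∀ r : ℝ, 0 ≤ C * r ^ 2 + (2 * B) * r + A := by
    intro r
    have h0 : (0:ℝ) ≤ ∫ x in α..β, (f x + r * g x) ^ 2 :=
      intervalIntegral.integral_nonneg hab (fun x _ => sq_nonneg _)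
    have hexp : (∫ x in α..β, (f x + r * g x) ^ 2)
        = C * r ^ 2 + (2 * B) * r + A := by
      have e : ∀ x, (f x + r * g x) ^ 2
          = (g x)^2 * r ^ 2 + (2 * (f x * g x)) * r + (f x)^2 := by intro x; ring
      have i1 : IntervalIntegrable (fun x => g x ^ 2 * r ^ 2) volume α β :=
        ((hg.pow 2).mul continuous_const).intervalIntegrable _ _
      have i2 : IntervalIntegrable (fun x => 2 * (f x * g x) * r) volume α β :=
        ((continuous_const.mul (hf.mul hg)).mul continuous_const).intervalIntegrable _ _
      have i3 : IntervalIntegrable (fun x => f x ^ 2) volume α β :=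
        (hf.pow 2).intervalIntegrable _ _
      simp_rw [e]
      rw [intervalIntegral.integral_add (i1.add i2) i3, intervalIntegral.integral_add i1 i2,
        intervalIntegral.integral_mul_const, intervalIntegral.integral_mul_const,
        intervalIntegral.integral_const_mul]
    rw [← hexp]; exact h0
  have hdisc : discrim C (2 * B) A ≤ 0 := by
    rcases eq_or_lt_of_le hCnn with hC0 | hCpos
    · -- C = 0 : then for all r, 2B r + A ≥ 0, forcing B = 0
      have hB0 : B = 0 := by
        by_contra hB0
        have := key ((-A - 1) / (2 * B))
        rw [← hC0] at this
        simp only [zero_mul] at this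
        have h2B : (2 * B) ≠ 0 := by simpa using hB0
        rw [mul_div_cancel₀ _ h2B] at this
        linarith
      rw [discrim, ← hC0, hB0]; norm_num
    · exact discrim_le_zero (by intro r; have := key r; linarith)
  have hBB : B ^ 2 ≤ A * C := by
    rw [discrim] at hdisc; nlinarith
  calc B ≤ |B| := le_abs_self _
    _ = Real.sqrt (B ^ 2) := (Real.sqrt_sq_eq_abs B).symm
    _ ≤ Real.sqrt (A * C) := Real.sqrt_le_sqrt hBB
    _ = Real.sqrt A * Real.sqrt C := Real.sqrt_mul hAnn C

lemma swap_tri (aa : ℝ) (ha : 0 < aa) (F : ℝ → ℝ → ℝ)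
    (hF : Continuous fun q : ℝ × ℝ => F q.1 q.2) :
    (∫ z in (0:ℝ)..1, ∫ s in (0:ℝ)..((1 - z)/aa), F z s)
      = ∫ s in (0:ℝ)..(1/aa), ∫ z in (0:ℝ)..(1 - aa*s), F z s := by
  set μ := volume.restrict (Set.Ioc (0:ℝ) 1) with hμ
  set ν := volume.restrict (Set.Ioc (0:ℝ) (1/aa)) with hν
  haveI : IsFiniteMeasure μ := ⟨by rw [Measure.restrict_apply_univ]; exact measure_Ioc_lt_top⟩
  haveI : IsFiniteMeasure ν := ⟨by rw [Measure.restrict_apply_univ]; exact measure_Ioc_lt_top⟩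
  set S : Set (ℝ × ℝ) := {q : ℝ × ℝ | q.1 + aa * q.2 ≤ 1} with hS
  have hSmeas : MeasurableSet S :=
    measurableSet_le (by fun_prop) measurable_const
  set G : ℝ × ℝ → ℝ := S.indicator (fun q => F q.1 q.2) with hG
  have hGle : ∀ z s : ℝ, G (z, s) = Set.indicator {s' : ℝ | z + aa * s' ≤ 1} (F z) s := by
    intro z s
    simp only [hG, hS, Set.indicator_apply, Set.mem_setOf_eq]
  have hGri : ∀ z s : ℝ, G (z, s) = Set.indicator {z' : ℝ | z' + aa * s ≤ 1} (fun z' => F z' s) z := by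
    intro z s
    simp only [hG, hS, Set.indicator_apply, Set.mem_setOf_eq]
  -- integrability of G on the product
  have hGint : Integrable (Function.uncurry fun z s => G (z, s)) (μ.prod ν) := by
    have hK : IsCompact (Set.Icc (0:ℝ) 1 ×ˢ Set.Icc (0:ℝ) (1/aa)) :=
      isCompact_Icc.prod isCompact_Icc
    obtain ⟨M, hM⟩ := hK.exists_bound_of_continuousOn hF.continuousOn
    have hprod : μ.prod ν
        = (volume.prod volume).restrict (Set.Ioc (0:ℝ) 1 ×ˢ Set.Ioc (0:ℝ) (1/aa)) :=
      Measure.prod_restrict _ _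
    have hae : ∀ᵐ q ∂(μ.prod ν), q ∈ Set.Ioc (0:ℝ) 1 ×ˢ Set.Ioc (0:ℝ) (1/aa) := by
      rw [hprod]; exact ae_restrict_mem (measurableSet_Ioc.prod measurableSet_Ioc)
    refine Integrable.mono' (integrable_const (max M 0)) ?_ ?_
    · exact (hF.aestronglyMeasurable.indicator hSmeas)
    · filter_upwards [hae] with q hq
      by_cases hqS : q ∈ S
      · have : Function.uncurry (fun z s => G (z, s)) q = F q.1 q.2 := by
          simp only [Function.uncurry]
          exact Set.indicator_of_mem hqS _
        rw [this]
        exact le_max_of_le_left (hM q ⟨Set.Ioc_subset_Icc_self hq.1, Set.Ioc_subset_Icc_self hq.2⟩)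
      · have : Function.uncurry (fun z s => G (z, s)) q = 0 := by
          simp only [Function.uncurry]
          exact Set.indicator_of_notMem hqS _
        rw [this, norm_zero]
        exact le_max_right _ _
  -- left side equals iterated integral of G
  have hL : (∫ z in (0:ℝ)..1, ∫ s in (0:ℝ)..((1 - z)/aa), F z s)
      = ∫ z, (∫ s, G (z, s) ∂ν) ∂μ := by
    rw [intervalIntegral.integral_of_le (by norm_num : (0:ℝ) ≤ 1)]
    refine setIntegral_congr_fun measurableSet_Ioc ?_
    intro z hz
    have h1 : (0:ℝ) ≤ (1 - z)/aa := div_nonneg (by linarith [hz.2]) ha.le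
    have h2 : (1 - z)/aa ≤ 1/aa := (div_le_div_iff_of_pos_right ha).mpr (by linarith [hz.1])
    have hset : {s' : ℝ | z + aa * s' ≤ 1} = Set.Iic ((1 - z)/aa) := by
      ext s'
      simp only [Set.mem_setOf_eq, Set.mem_Iic]
      rw [le_div_iff₀ ha]
      constructor <;> intro <;> linarith
    calc ∫ s in (0:ℝ)..((1 - z)/aa), F z s
        = ∫ s in Set.Ioc (0:ℝ) ((1 - z)/aa), F z s := by
          rw [intervalIntegral.integral_of_le h1]
      _ = ∫ s in Set.Ioc (0:ℝ) (1/aa) ∩ Set.Iic ((1 - z)/aa), F z s := by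
          rw [Set.Ioc_inter_Iic, min_eq_right h2]
      _ = ∫ s in Set.Ioc (0:ℝ) (1/aa), Set.indicator (Set.Iic ((1 - z)/aa)) (F z) s := by
          rw [setIntegral_indicator measurableSet_Iic]
      _ = ∫ s, G (z, s) ∂ν := by
          rw [hν]
          refine setIntegral_congr_fun measurableSet_Ioc ?_
          intro s _
          show _ = G (z, s)
          rw [hGle z s, hset]
  have hR : (∫ s, (∫ z, G (z, s) ∂μ) ∂ν)
      = ∫ s in (0:ℝ)..(1/aa), ∫ z in (0:ℝ)..(1 - aa*s), F z s := by
    rw [intervalIntegral.integral_of_le (by positivity : (0:ℝ) ≤ 1/aa), hν]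
    refine (setIntegral_congr_fun measurableSet_Ioc ?_).symm
    intro s hs
    have h1 : (0:ℝ) ≤ 1 - aa * s := by
      have : aa * s ≤ aa * (1/aa) := by
        exact mul_le_mul_of_nonneg_left hs.2 ha.le
      rw [mul_one_div, div_self ha.ne'] at this
      linarith
    have h2 : 1 - aa * s ≤ 1 := by nlinarith [hs.1]
    have hset : {z' : ℝ | z' + aa * s ≤ 1} = Set.Iic (1 - aa * s) := by
      ext z'
      simp only [Set.mem_setOf_eq, Set.mem_Iic]
      constructor <;> intro <;> linarith
    calc ∫ z in (0:ℝ)..(1 - aa*s), F z s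
        = ∫ z in Set.Ioc (0:ℝ) (1 - aa*s), F z s := by
          rw [intervalIntegral.integral_of_le h1]
      _ = ∫ z in Set.Ioc (0:ℝ) 1 ∩ Set.Iic (1 - aa*s), F z s := by
          rw [Set.Ioc_inter_Iic, min_eq_right h2]
      _ = ∫ z in Set.Ioc (0:ℝ) 1, Set.indicator (Set.Iic (1 - aa*s)) (fun z' => F z' s) z := by
          rw [setIntegral_indicator measurableSet_Iic]
      _ = ∫ z, G (z, s) ∂μ := by
          rw [hμ]
          refine setIntegral_congr_fun measurableSet_Ioc ?_
          intro z _
          show _ = G (z, s)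
          rw [hGri z s, hset]
  rw [hL, ← hR]
  exact integral_integral_swap hGint

lemma swap_rect (α β γ δ : ℝ) (hαβ : α ≤ β) (hγδ : γ ≤ δ) (F : ℝ → ℝ → ℝ)
    (hF : Continuous fun q : ℝ × ℝ => F q.1 q.2) :
    (∫ x in α..β, ∫ y in γ..δ, F x y) = ∫ y in γ..δ, ∫ x in α..β, F x y := by
  set μ := volume.restrict (Set.Ioc α β) with hμ
  set ν := volume.restrict (Set.Ioc γ δ) with hν
  haveI : IsFiniteMeasure μ := ⟨by rw [Measure.restrict_apply_univ]; exact measure_Ioc_lt_top⟩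
  haveI : IsFiniteMeasure ν := ⟨by rw [Measure.restrict_apply_univ]; exact measure_Ioc_lt_top⟩
  have hGint : Integrable (Function.uncurry F) (μ.prod ν) := by
    obtain ⟨M, hM⟩ := (isCompact_Icc.prod isCompact_Icc :
      IsCompact (Set.Icc α β ×ˢ Set.Icc γ δ)).exists_bound_of_continuousOn hF.continuousOn
    have hprod : μ.prod ν = (volume.prod volume).restrict (Set.Ioc α β ×ˢ Set.Ioc γ δ) :=
      Measure.prod_restrict _ _
    have hae : ∀ᵐ q ∂(μ.prod ν), q ∈ Set.Ioc α β ×ˢ Set.Ioc γ δ := by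
      rw [hprod]; exact ae_restrict_mem (measurableSet_Ioc.prod measurableSet_Ioc)
    refine Integrable.mono' (integrable_const M) hF.aestronglyMeasurable ?_
    filter_upwards [hae] with q hq
    exact hM q ⟨Set.Ioc_subset_Icc_self hq.1, Set.Ioc_subset_Icc_self hq.2⟩
  calc (∫ x in α..β, ∫ y in γ..δ, F x y)
      = ∫ x, (∫ y, F x y ∂ν) ∂μ := by
        rw [intervalIntegral.integral_of_le hαβ]
        refine setIntegral_congr_fun measurableSet_Ioc fun x _ => ?_
        rw [intervalIntegral.integral_of_le hγδ]
    _ = ∫ y, (∫ x, F x y ∂μ) ∂ν := integral_integral_swap hGint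
    _ = ∫ y in γ..δ, ∫ x in α..β, F x y := by
        rw [intervalIntegral.integral_of_le hγδ]
        refine setIntegral_congr_fun measurableSet_Ioc fun y _ => ?_
        rw [intervalIntegral.integral_of_le hαβ]

lemma u_rep (a : ℝ) (ha : 0 < a) (c w u : ℝ → ℝ → ℝ)
    (hcw : Continuous fun q : ℝ × ℝ => c q.1 q.2 * w q.1 q.2)
    (hu : ContDiff ℝ 1 (fun q : ℝ × ℝ => u q.1 q.2))
    (pde2 : ∀ x ∈ Set.Ioo (0:ℝ) 1, ∀ t > (0:ℝ),
      deriv (u x) t - a * deriv (fun y => u y t) x + c x t * w x t = 0)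
    (bcu : ∀ t > (0:ℝ), u 1 t = 0) :
    ∀ z ∈ Set.Icc (0:ℝ) 1, ∀ θ : ℝ, 1/a < θ →
      u z θ = -∫ s in (0:ℝ)..((1 - z)/a), c (z + a*s) (θ - s) * w (z + a*s) (θ - s) := by
  intro z hz θ hθ
  have h1a : 0 < 1/a := by positivity
  set S := (1 - z)/a with hS
  have hS0 : 0 ≤ S := div_nonneg (by linarith [hz.2]) ha.le
  have hS1a : S ≤ 1/a := by
    rw [hS, div_le_div_iff₀ ha ha]
    nlinarith [hz.1]
  set g : ℝ → ℝ := fun s => u (z + a*s) (θ - s) with hg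
  have hgc : ContinuousOn g (Set.Icc 0 S) := by
    apply Continuous.continuousOn
    exact hu.continuous.comp ((continuous_const.add (continuous_const.mul continuous_id)).prodMk
      (continuous_const.sub continuous_id))
  have hderiv : ∀ s ∈ Set.Ioo 0 S,
      HasDerivWithinAt g (c (z + a*s) (θ - s) * w (z + a*s) (θ - s)) (Set.Ioi s) s := by
    intro s hs
    have hx1 : 0 < z + a*s := by nlinarith [hz.1, hs.1]
    have hx2 : z + a*s < 1 := by
      have := hs.2
      rw [hS, lt_div_iff₀ ha] at this
      nlinarith
    have ht' : 0 < θ - s := by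
      have : s < 1/a := lt_of_lt_of_le hs.2 hS1a
      linarith
    have hline := hasDerivAt_line u hu z θ a (-1) s
    have pde := pde2 (z + a*s) ⟨hx1, hx2⟩ (θ - s) ht'
    have heq : (fun s : ℝ => u (z + a * s) (θ + (-1) * s)) = g := by
      funext s'; rw [hg]; ring_nf
    have hval : a * deriv (fun y => u y (θ + (-1) * s)) (z + a * s)
        + (-1) * deriv (u (z + a * s)) (θ + (-1) * s)
        = c (z + a*s) (θ - s) * w (z + a*s) (θ - s) := by
      have e : θ + (-1) * s = θ - s := by ring
      rw [e]
      linarith [pde]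
    rw [heq, hval] at hline
    exact hline.hasDerivWithinAt
  have hint : IntervalIntegrable
      (fun s => c (z + a*s) (θ - s) * w (z + a*s) (θ - s)) volume 0 S := by
    apply Continuous.intervalIntegrable
    exact hcw.comp ((continuous_const.add (continuous_const.mul continuous_id)).prodMk
      (continuous_const.sub continuous_id))
  have hftc := intervalIntegral.integral_eq_sub_of_hasDeriv_right_of_le hS0 hgc hderiv hint
  have hgS : g S = 0 := by
    have hzS : z + a * S = 1 := by rw [hS]; field_simp; ring
    rw [hg]
    simp only
    rw [hzS]
    exact bcu _ (by linarith)
  have hg0 : g 0 = u z θ := by rw [hg]; simp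
  rw [hftc, hgS, hg0]
  ring

lemma w_rep (a p : ℝ) (ha : 0 < a) (w u : ℝ → ℝ → ℝ)
    (hw : ContDiff ℝ 1 (fun q : ℝ × ℝ => w q.1 q.2))
    (hu : ContDiff ℝ 1 (fun q : ℝ × ℝ => u q.1 q.2))
    (pde1 : ∀ x ∈ Set.Ioo (0:ℝ) 1, ∀ t > (0:ℝ),
      deriv (w x) t + a * deriv (fun y => w y t) x = u x t)
    (bcw : ∀ t > (0:ℝ), w 0 t = p * u 0 t) :
    ∀ x ∈ Set.Icc (0:ℝ) 1, ∀ t : ℝ, 1/a < t →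
      w x t = p * u 0 (t - x/a) + ∫ s in (0:ℝ)..(x/a), u (x - a*s) (t - s) := by
  intro x hx t htt
  have h1a : 0 < 1/a := by positivity
  set S := x/a with hS
  have hS0 : 0 ≤ S := div_nonneg hx.1 ha.le
  have hS1a : S ≤ 1/a := by
    rw [hS, div_le_div_iff₀ ha ha]
    nlinarith [hx.2]
  set g : ℝ → ℝ := fun s => w (x - a*s) (t - s) with hg
  have hgc : ContinuousOn g (Set.Icc 0 S) := by
    apply Continuous.continuousOn
    exact hw.continuous.comp ((continuous_const.sub (continuous_const.mul continuous_id)).prodMk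
      (continuous_const.sub continuous_id))
  have hderiv : ∀ s ∈ Set.Ioo 0 S,
      HasDerivWithinAt g (-(u (x - a*s) (t - s))) (Set.Ioi s) s := by
    intro s hs
    have hx2 : x - a*s < 1 := by nlinarith [hx.2, hs.1]
    have hx1 : 0 < x - a*s := by
      have := hs.2
      rw [hS, lt_div_iff₀ ha] at this
      nlinarith
    have ht' : 0 < t - s := by
      have : s < 1/a := lt_of_lt_of_le hs.2 hS1a
      linarith
    have hline := hasDerivAt_line w hw x t (-a) (-1) s
    have pde := pde1 (x - a*s) ⟨hx1, hx2⟩ (t - s) ht'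
    have heq : (fun s : ℝ => w (x + (-a) * s) (t + (-1) * s)) = g := by
      funext s'; rw [hg]; ring_nf
    have hval : (-a) * deriv (fun y => w y (t + (-1) * s)) (x + (-a) * s)
        + (-1) * deriv (w (x + (-a) * s)) (t + (-1) * s)
        = -(u (x - a*s) (t - s)) := by
      have e1 : t + (-1) * s = t - s := by ring
      have e2 : x + (-a) * s = x - a * s := by ring
      rw [e1, e2]
      linarith [pde]
    rw [heq, hval] at hline
    exact hline.hasDerivWithinAt
  have hint : IntervalIntegrable (fun s => -(u (x - a*s) (t - s))) volume 0 S := by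
    apply Continuous.intervalIntegrable
    exact (hu.continuous.comp ((continuous_const.sub (continuous_const.mul continuous_id)).prodMk
      (continuous_const.sub continuous_id))).neg
  have hftc := intervalIntegral.integral_eq_sub_of_hasDeriv_right_of_le hS0 hgc hderiv hint
  have hgS : g S = p * u 0 (t - x/a) := by
    have hzS : x - a * S = 0 := by rw [hS]; field_simp; ring
    rw [hg]
    simp only
    rw [hzS, hS]
    exact bcw _ (by linarith)
  have hg0 : g 0 = w x t := by rw [hg]; simp
  rw [intervalIntegral.integral_neg] at hftc
  rw [hgS, hg0] at hftc
  have : ∫ s in (0:ℝ)..(x/a), u (x - a*s) (t - s) = w x t - p * u 0 (t - x/a) := by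
    rw [← hS]; linarith [hftc]
  linarith [this]

lemma E_bound (a Cb : ℝ) (ha : 0 < a) (hCb0 : 0 ≤ Cb) (c w u : ℝ → ℝ → ℝ)
    (hcc : Continuous fun q : ℝ × ℝ => c q.1 q.2)
    (hwc : Continuous fun q : ℝ × ℝ => w q.1 q.2)
    (huc : Continuous fun q : ℝ × ℝ => u q.1 q.2)
    (hCb : ∀ x ∈ Set.Icc (0:ℝ) 1, ∀ s ≥ (0:ℝ), |c x s| ≤ Cb)
    (hWc : Continuous fun τ => Real.sqrt (∫ x in (0:ℝ)..1, (w x τ)^2))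
    (θ : ℝ) (hθ : 1/a < θ)
    (hrep : ∀ z ∈ Set.Icc (0:ℝ) 1,
      u z θ = -∫ s in (0:ℝ)..((1-z)/a), c (z+a*s) (θ-s) * w (z+a*s) (θ-s)) :
    Real.sqrt (∫ z in (0:ℝ)..1, (u z θ)^2)
      ≤ Cb * ∫ τ in (θ - 1/a)..θ, Real.sqrt (∫ x in (0:ℝ)..1, (w x τ)^2) := by
  have h1a : 0 < 1/a := by positivity
  set W : ℝ → ℝ := fun τ => Real.sqrt (∫ x in (0:ℝ)..1, (w x τ)^2) with hW
  set E : ℝ := Real.sqrt (∫ z in (0:ℝ)..1, (u z θ)^2) with hE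
  set J : ℝ := ∫ τ in (θ - 1/a)..θ, W τ with hJ
  have hWnn : ∀ τ, 0 ≤ W τ := fun τ => Real.sqrt_nonneg _
  have hJnn : 0 ≤ J :=
    intervalIntegral.integral_nonneg (by linarith) (fun τ _ => hWnn τ)
  have hEnn : 0 ≤ E := Real.sqrt_nonneg _
  have hE2 : E^2 = ∫ z in (0:ℝ)..1, (u z θ)^2 :=
    Real.sq_sqrt (intervalIntegral.integral_nonneg (by norm_num) (fun z _ => sq_nonneg _))
  -- continuity helpers
  have huzc : Continuous fun z => u z θ :=
    huc.comp (continuous_id.prodMk continuous_const)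
  -- pointwise bound on |u z θ|
  have hupt : ∀ z ∈ Set.Icc (0:ℝ) 1,
      |u z θ| ≤ Cb * ∫ s in (0:ℝ)..((1-z)/a), |w (z+a*s) (θ-s)| := by
    intro z hz
    have hS0 : (0:ℝ) ≤ (1-z)/a := div_nonneg (by linarith [hz.2]) ha.le
    have hS1a : (1-z)/a ≤ 1/a := by
      rw [div_le_div_iff₀ ha ha]; nlinarith [hz.1]
    rw [hrep z hz, abs_neg]
    calc |∫ s in (0:ℝ)..((1-z)/a), c (z+a*s) (θ-s) * w (z+a*s) (θ-s)|
        ≤ ∫ s in (0:ℝ)..((1-z)/a), |c (z+a*s) (θ-s) * w (z+a*s) (θ-s)| :=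
          intervalIntegral.abs_integral_le_integral_abs hS0
      _ ≤ ∫ s in (0:ℝ)..((1-z)/a), Cb * |w (z+a*s) (θ-s)| := by
          apply intervalIntegral.integral_mono_on hS0
          · apply Continuous.intervalIntegrable
            exact ((hcc.comp ((continuous_const.add (continuous_const.mul continuous_id)).prodMk
              (continuous_const.sub continuous_id))).mul
              (hwc.comp ((continuous_const.add (continuous_const.mul continuous_id)).prodMk
              (continuous_const.sub continuous_id)))).abs
          · apply Continuous.intervalIntegrable
            exact continuous_const.mul
              (hwc.comp ((continuous_const.add (continuous_const.mul continuous_id)).prodMk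
              (continuous_const.sub continuous_id))).abs
          · intro s hs
            rw [abs_mul]
            apply mul_le_mul_of_nonneg_right _ (abs_nonneg _)
            apply hCb
            · constructor
              · have : 0 ≤ a * s := mul_nonneg ha.le hs.1
                linarith [hz.1]
              · have : a * s ≤ a * ((1-z)/a) := mul_le_mul_of_nonneg_left hs.2 ha.le
                rw [mul_div_cancel₀ _ ha.ne'] at this
                linarith
            · have : s ≤ 1/a := le_trans hs.2 hS1a
              linarith
      _ = Cb * ∫ s in (0:ℝ)..((1-z)/a), |w (z+a*s) (θ-s)| :=
          intervalIntegral.integral_const_mul _ _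
  -- main chain
  have hchain : E^2 ≤ Cb * (E * J) := by
    have step2 : E^2 ≤ ∫ z in (0:ℝ)..1,
        Cb * ∫ s in (0:ℝ)..((1-z)/a), |u z θ| * |w (z+a*s) (θ-s)| := by
      rw [hE2]
      apply intervalIntegral.integral_mono_on (by norm_num)
      · exact Continuous.intervalIntegrable (huzc.pow 2) _ _
      · apply Continuous.intervalIntegrable
        apply continuous_const.mul
        apply continuous_parametric_intervalIntegral_of_continuous (μ := volume)
        · exact (huzc.comp continuous_fst).abs.mul
            ((hwc.comp ((continuous_fst.add (continuous_const.mul continuous_snd)).prodMk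
              (continuous_const.sub continuous_snd))).abs)
        · exact (continuous_const.sub continuous_id).div_const a
      · intro z hz
        have e1 : (u z θ)^2 = |u z θ| * |u z θ| := by
          rw [← abs_mul, abs_mul_self]; ring
        rw [e1]
        calc |u z θ| * |u z θ|
            ≤ |u z θ| * (Cb * ∫ s in (0:ℝ)..((1-z)/a), |w (z+a*s) (θ-s)|) :=
              mul_le_mul_of_nonneg_left (hupt z hz) (abs_nonneg _)
          _ = Cb * ∫ s in (0:ℝ)..((1-z)/a), |u z θ| * |w (z+a*s) (θ-s)| := by
              rw [intervalIntegral.integral_const_mul]; ring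
    have step3 : (∫ z in (0:ℝ)..1,
        Cb * ∫ s in (0:ℝ)..((1-z)/a), |u z θ| * |w (z+a*s) (θ-s)|)
        = Cb * ∫ s in (0:ℝ)..(1/a), ∫ z in (0:ℝ)..(1 - a*s), |u z θ| * |w (z+a*s) (θ-s)| := by
      rw [intervalIntegral.integral_const_mul]
      rw [swap_tri a ha (fun z s => |u z θ| * |w (z+a*s) (θ-s)|)]
      exact (huzc.comp continuous_fst).abs.mul
        ((hwc.comp ((continuous_fst.add (continuous_const.mul continuous_snd)).prodMk
          (continuous_const.sub continuous_snd))).abs)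
    have step5 : ∀ s ∈ Set.Icc (0:ℝ) (1/a),
        (∫ z in (0:ℝ)..(1 - a*s), |u z θ| * |w (z+a*s) (θ-s)|) ≤ E * W (θ - s) := by
      intro s hs
      have hL0 : (0:ℝ) ≤ 1 - a*s := by
        have : a * s ≤ a * (1/a) := mul_le_mul_of_nonneg_left hs.2 ha.le
        rw [mul_one_div, div_self ha.ne'] at this
        linarith
      have has0 : 0 ≤ a * s := mul_nonneg ha.le hs.1
      have hcs := cs_interval hL0 (fun z => |u z θ|) (fun z => |w (z+a*s) (θ-s)|)
        huzc.abs
        ((hwc.comp ((continuous_id.add continuous_const).prodMk continuous_const)).abs)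
      refine le_trans hcs ?_
      apply mul_le_mul
      · -- sqrt of sub-interval integral of u² ≤ E
        rw [hE]
        apply Real.sqrt_le_sqrt
        simp_rw [sq_abs]
        apply intervalIntegral.integral_mono_interval le_rfl hL0 (by linarith)
        · exact Filter.Eventually.of_forall (fun z => sq_nonneg _)
        · exact Continuous.intervalIntegrable (huzc.pow 2) _ _
      · -- sqrt of shifted w² integral ≤ W (θ - s)
        rw [hW]
        simp_rw [sq_abs]
        have hshift : (∫ z in (0:ℝ)..(1 - a*s), (w (z + a*s) (θ-s))^2)
            = ∫ y in (0 + a*s)..(1 - a*s + a*s), (w y (θ-s))^2 :=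
          intervalIntegral.integral_comp_add_right (fun y => (w y (θ-s))^2) (a*s)
        rw [hshift]
        apply Real.sqrt_le_sqrt
        apply intervalIntegral.integral_mono_interval (by linarith) (by linarith) (by linarith)
        · exact Filter.Eventually.of_forall (fun z => sq_nonneg _)
        · exact Continuous.intervalIntegrable
            ((hwc.comp (continuous_id.prodMk continuous_const)).pow 2) _ _
      · exact Real.sqrt_nonneg _
      · exact Real.sqrt_nonneg _
    have step6 : (∫ s in (0:ℝ)..(1/a),
        ∫ z in (0:ℝ)..(1 - a*s), |u z θ| * |w (z+a*s) (θ-s)|)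
        ≤ ∫ s in (0:ℝ)..(1/a), E * W (θ - s) := by
      apply intervalIntegral.integral_mono_on h1a.le
      · apply Continuous.intervalIntegrable
        apply continuous_parametric_intervalIntegral_of_continuous (μ := volume)
        · exact ((huzc.comp continuous_snd).abs).mul
            ((hwc.comp ((continuous_snd.add (continuous_const.mul continuous_fst)).prodMk
              (continuous_const.sub continuous_fst))).abs)
        · exact continuous_const.sub (continuous_const.mul continuous_id)
      · exact Continuous.intervalIntegrable
          (continuous_const.mul (hWc.comp (continuous_const.sub continuous_id))) _ _
      · exact step5
    have step7 : (∫ s in (0:ℝ)..(1/a), E * W (θ - s)) = E * J := by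
      rw [intervalIntegral.integral_const_mul, hJ]
      congr 1
      have := intervalIntegral.integral_comp_sub_left (a := (0:ℝ)) (b := 1/a) W θ
      simpa using this
    calc E^2 ≤ ∫ z in (0:ℝ)..1,
          Cb * ∫ s in (0:ℝ)..((1-z)/a), |u z θ| * |w (z+a*s) (θ-s)| := step2
      _ = Cb * ∫ s in (0:ℝ)..(1/a),
            ∫ z in (0:ℝ)..(1 - a*s), |u z θ| * |w (z+a*s) (θ-s)| := step3
      _ ≤ Cb * (E * J) := by
          apply mul_le_mul_of_nonneg_left _ hCb0
          exact le_trans step6 (le_of_eq step7)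
  -- conclude
  rcases eq_or_lt_of_le hEnn with hE0 | hEpos
  · rw [← hE0]; positivity
  · nlinarith [hchain]

lemma trace_bound (a Cb : ℝ) (ha : 0 < a) (hCb0 : 0 ≤ Cb) (c w u : ℝ → ℝ → ℝ)
    (hcc : Continuous fun q : ℝ × ℝ => c q.1 q.2)
    (hwc : Continuous fun q : ℝ × ℝ => w q.1 q.2)
    (hu : ContDiff ℝ 1 (fun q : ℝ × ℝ => u q.1 q.2))
    (hCb : ∀ x ∈ Set.Icc (0:ℝ) 1, ∀ s ≥ (0:ℝ), |c x s| ≤ Cb)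
    (pde2 : ∀ x ∈ Set.Ioo (0:ℝ) 1, ∀ t > (0:ℝ),
      deriv (u x) t - a * deriv (fun y => u y t) x + c x t * w x t = 0)
    (bcu : ∀ t > (0:ℝ), u 1 t = 0)
    (t1 t2 : ℝ) (ht1 : 0 < t1) (ht12 : t1 ≤ t2) :
    a * ∫ θ in t1..t2, (u 0 θ)^2
      ≤ (∫ z in (0:ℝ)..1, (u z t1)^2)
        + 2 * Cb * ∫ θ in t1..t2,
            (Real.sqrt (∫ z in (0:ℝ)..1, (u z θ)^2))
              * Real.sqrt (∫ x in (0:ℝ)..1, (w x θ)^2) := by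
  set U : ℝ × ℝ → ℝ := fun q => u q.1 q.2 with hU
  have huc : Continuous U := hu.continuous
  -- continuity of partial derivatives
  have hDtu : Continuous fun q : ℝ × ℝ => deriv (u q.1) q.2 := by
    have h1 : (fun q : ℝ × ℝ => deriv (u q.1) q.2)
        = fun q : ℝ × ℝ => fderiv ℝ U q ((0:ℝ), (1:ℝ)) := by
      funext q
      exact (hasDerivAt_partial_t u hu q.1 q.2).deriv
    rw [h1]
    exact (hu.continuous_fderiv one_ne_zero).clm_apply continuous_const
  have hDxu : Continuous fun q : ℝ × ℝ => deriv (fun y => u y q.2) q.1 := by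
    have h1 : (fun q : ℝ × ℝ => deriv (fun y => u y q.2) q.1)
        = fun q : ℝ × ℝ => fderiv ℝ U q ((1:ℝ), (0:ℝ)) := by
      funext q
      exact (hasDerivAt_partial_x u hu q.1 q.2).deriv
    rw [h1]
    exact (hu.continuous_fderiv one_ne_zero).clm_apply continuous_const
  -- FTC in time for each z
  have key1 : ∀ z : ℝ, (∫ θ in t1..t2, 2 * u z θ * deriv (u z) θ)
      = (u z t2)^2 - (u z t1)^2 := by
    intro z
    apply intervalIntegral.integral_eq_sub_of_hasDerivAt (f := fun θ => (u z θ)^2)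
    · intro θ _
      have h := hasDerivAt_partial_t u hu z θ
      have h2 := h.pow 2
      have e : (2:ℕ) * u z θ ^ (2-1) * fderiv ℝ U (z, θ) (0, 1)
          = 2 * u z θ * deriv (u z) θ := by
        rw [h.deriv]; push_cast; ring
      rw [e] at h2
      exact h2
    · apply Continuous.intervalIntegrable
      exact (continuous_const.mul (huc.comp (continuous_const.prodMk continuous_id))).mul
        (hDtu.comp (continuous_const.prodMk continuous_id))
  -- FTC in space at fixed θ
  have key2 : ∀ θ : ℝ, (∫ z in (0:ℝ)..1, 2 * u z θ * deriv (fun y => u y θ) z)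
      = (u 1 θ)^2 - (u 0 θ)^2 := by
    intro θ
    apply intervalIntegral.integral_eq_sub_of_hasDerivAt (f := fun z => (u z θ)^2)
    · intro z _
      have h := hasDerivAt_partial_x u hu z θ
      have h2 := h.pow 2
      have e : (2:ℕ) * u z θ ^ (2-1) * fderiv ℝ U (z, θ) (1, 0)
          = 2 * u z θ * deriv (fun y => u y θ) z := by
        rw [h.deriv]; push_cast; ring
      rw [e] at h2
      exact h2
    · apply Continuous.intervalIntegrable
      exact (continuous_const.mul (huc.comp (continuous_id.prodMk continuous_const))).mul
        (hDxu.comp (continuous_id.prodMk continuous_const))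
  -- pointwise-in-θ evaluation of the z-integral
  have key3 : ∀ θ ∈ Set.Icc t1 t2,
      (∫ z in (0:ℝ)..1, 2 * u z θ * deriv (u z) θ)
        = -(a * (u 0 θ)^2) - ∫ z in (0:ℝ)..1, 2 * c z θ * u z θ * w z θ := by
    intro θ hθ
    have hθ0 : 0 < θ := lt_of_lt_of_le ht1 hθ.1
    have hae : ∀ᵐ z : ℝ ∂volume, z ∈ Set.uIoc (0:ℝ) 1 →
        2 * u z θ * deriv (u z) θ
          = a * (2 * u z θ * deriv (fun y => u y θ) z) - 2 * c z θ * u z θ * w z θ := by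
      have h1 : {(1:ℝ)}ᶜ ∈ MeasureTheory.ae volume :=
        MeasureTheory.compl_mem_ae_iff.mpr (measure_singleton (1:ℝ))
      filter_upwards [h1] with z hz1' hzI
      have hz1 : z ≠ 1 := by simpa using hz1'
      rw [Set.uIoc_of_le (by norm_num : (0:ℝ) ≤ 1)] at hzI
      have hz : z ∈ Set.Ioo (0:ℝ) 1 := ⟨hzI.1, lt_of_le_of_ne hzI.2 hz1⟩
      have hp := pde2 z hz θ hθ0
      have : deriv (u z) θ = a * deriv (fun y => u y θ) z - c z θ * w z θ := by linarith
      rw [this]; ring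
    rw [intervalIntegral.integral_congr_ae hae]
    have hint1 : IntervalIntegrable
        (fun z => a * (2 * u z θ * deriv (fun y => u y θ) z)) volume 0 1 := by
      apply Continuous.intervalIntegrable
      exact continuous_const.mul
        ((continuous_const.mul (huc.comp (continuous_id.prodMk continuous_const))).mul
          (hDxu.comp (continuous_id.prodMk continuous_const)))
    have hint2 : IntervalIntegrable (fun z => 2 * c z θ * u z θ * w z θ) volume 0 1 := by
      apply Continuous.intervalIntegrable
      exact ((continuous_const.mul
        (hcc.comp (continuous_id.prodMk continuous_const))).mul
        (huc.comp (continuous_id.prodMk continuous_const))).mul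
        (hwc.comp (continuous_id.prodMk continuous_const))
    rw [intervalIntegral.integral_sub hint1 hint2, intervalIntegral.integral_const_mul, key2]
    rw [bcu θ hθ0]
    ring
  -- put everything together via Fubini
  have swap : (∫ z in (0:ℝ)..1, ((u z t2)^2 - (u z t1)^2))
      = ∫ θ in t1..t2, (∫ z in (0:ℝ)..1, 2 * u z θ * deriv (u z) θ) := by
    rw [← swap_rect 0 1 t1 t2 (by norm_num) ht12 (fun z θ => 2 * u z θ * deriv (u z) θ)
      ((continuous_const.mul huc).mul hDtu)]
    apply intervalIntegral.integral_congr
    intro z _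
    exact (key1 z).symm
  set R : ℝ → ℝ := fun θ => ∫ z in (0:ℝ)..1, 2 * c z θ * u z θ * w z θ with hR
  set E : ℝ → ℝ := fun θ => Real.sqrt (∫ z in (0:ℝ)..1, (u z θ)^2) with hEdef
  set Wf : ℝ → ℝ := fun τ => Real.sqrt (∫ x in (0:ℝ)..1, (w x τ)^2) with hWdef
  have hRc : Continuous R := by
    apply continuous_parametric_intervalIntegral_of_continuous' (μ := volume)
    exact ((continuous_const.mul (hcc.comp (continuous_snd.prodMk continuous_fst))).mul
      (huc.comp (continuous_snd.prodMk continuous_fst))).mul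
      (hwc.comp (continuous_snd.prodMk continuous_fst))
  have hEc : Continuous E := by
    apply Real.continuous_sqrt.comp
    apply continuous_parametric_intervalIntegral_of_continuous' (μ := volume)
    exact (huc.comp (continuous_snd.prodMk continuous_fst)).pow 2
  have hWc : Continuous Wf := by
    apply Real.continuous_sqrt.comp
    apply continuous_parametric_intervalIntegral_of_continuous' (μ := volume)
    exact (hwc.comp (continuous_snd.prodMk continuous_fst)).pow 2
  have hmain : (∫ z in (0:ℝ)..1, ((u z t2)^2 - (u z t1)^2))
      = ∫ θ in t1..t2, (-(a * (u 0 θ)^2) - R θ) := by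
    rw [swap]
    apply intervalIntegral.integral_congr
    intro θ hθ
    rw [Set.uIcc_of_le ht12] at hθ
    exact key3 θ hθ
  -- split both sides
  have hu2int : ∀ τ : ℝ, IntervalIntegrable (fun z => (u z τ)^2) volume 0 1 :=
    fun τ => Continuous.intervalIntegrable
      ((huc.comp (continuous_id.prodMk continuous_const)).pow 2) _ _
  have hφint : IntervalIntegrable (fun θ => (u 0 θ)^2) volume t1 t2 :=
    Continuous.intervalIntegrable
      ((huc.comp (continuous_const.prodMk continuous_id)).pow 2) _ _
  have hLsplit : (∫ z in (0:ℝ)..1, ((u z t2)^2 - (u z t1)^2))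
      = (∫ z in (0:ℝ)..1, (u z t2)^2) - ∫ z in (0:ℝ)..1, (u z t1)^2 :=
    intervalIntegral.integral_sub (hu2int t2) (hu2int t1)
  have hRsplit : (∫ θ in t1..t2, (-(a * (u 0 θ)^2) - R θ))
      = -(a * ∫ θ in t1..t2, (u 0 θ)^2) - ∫ θ in t1..t2, R θ := by
    have i1 : IntervalIntegrable (fun θ => -(a * (u 0 θ)^2)) volume t1 t2 := by
      apply Continuous.intervalIntegrable
      exact (continuous_const.mul
        ((huc.comp (continuous_const.prodMk continuous_id)).pow 2)).neg
    rw [intervalIntegral.integral_sub i1 (hRc.intervalIntegrable _ _),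
      intervalIntegral.integral_neg, intervalIntegral.integral_const_mul]
  -- bound |R θ|
  have hRbound : ∀ θ ∈ Set.Icc t1 t2, |R θ| ≤ 2 * Cb * (E θ * Wf θ) := by
    intro θ hθ
    have hθ0 : 0 < θ := lt_of_lt_of_le ht1 hθ.1
    have step1 : |R θ| ≤ ∫ z in (0:ℝ)..1, 2 * Cb * (|u z θ| * |w z θ|) := by
      refine le_trans (intervalIntegral.abs_integral_le_integral_abs (by norm_num)) ?_
      apply intervalIntegral.integral_mono_on (by norm_num)
      · apply Continuous.intervalIntegrable
        exact (((continuous_const.mul (hcc.comp (continuous_id.prodMk continuous_const))).mul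
          (huc.comp (continuous_id.prodMk continuous_const))).mul
          (hwc.comp (continuous_id.prodMk continuous_const))).abs
      · apply Continuous.intervalIntegrable
        exact continuous_const.mul
          (((huc.comp (continuous_id.prodMk continuous_const)).abs).mul
            ((hwc.comp (continuous_id.prodMk continuous_const)).abs))
      · intro z hz
        have : |2 * c z θ * u z θ * w z θ| = 2 * |c z θ| * (|u z θ| * |w z θ|) := by
          rw [abs_mul, abs_mul, abs_mul]
          simp [abs_two]
          ring
        rw [this]
        have hcb := hCb z hz θ hθ0.le
        nlinarith [abs_nonneg (u z θ), abs_nonneg (w z θ), abs_nonneg (c z θ),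
          mul_nonneg (abs_nonneg (u z θ)) (abs_nonneg (w z θ))]
    have step2 : (∫ z in (0:ℝ)..1, 2 * Cb * (|u z θ| * |w z θ|))
        = 2 * Cb * ∫ z in (0:ℝ)..1, |u z θ| * |w z θ| :=
      intervalIntegral.integral_const_mul _ _
    have step3 : (∫ z in (0:ℝ)..1, |u z θ| * |w z θ|) ≤ E θ * Wf θ := by
      have := cs_interval (by norm_num : (0:ℝ) ≤ 1)
        (fun z => |u z θ|) (fun z => |w z θ|)
        (huc.comp (continuous_id.prodMk continuous_const)).abs
        (hwc.comp (continuous_id.prodMk continuous_const)).abs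
      simp_rw [sq_abs] at this
      exact this
    calc |R θ| ≤ 2 * Cb * ∫ z in (0:ℝ)..1, |u z θ| * |w z θ| := by
          rw [← step2]; exact step1
      _ ≤ 2 * Cb * (E θ * Wf θ) := by
          apply mul_le_mul_of_nonneg_left step3 (by positivity)
  -- integrate the bound
  have hRint : |∫ θ in t1..t2, R θ| ≤ 2 * Cb * ∫ θ in t1..t2, E θ * Wf θ := by
    refine le_trans (intervalIntegral.abs_integral_le_integral_abs ht12) ?_
    have h1 : (∫ θ in t1..t2, |R θ|) ≤ ∫ θ in t1..t2, 2 * Cb * (E θ * Wf θ) := by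
      apply intervalIntegral.integral_mono_on ht12
      · exact (hRc.abs).intervalIntegrable _ _
      · exact (continuous_const.mul (hEc.mul hWc)).intervalIntegrable _ _
      · exact hRbound
    rw [intervalIntegral.integral_const_mul] at h1
    exact h1
  have hD2 : 0 ≤ ∫ z in (0:ℝ)..1, (u z t2)^2 :=
    intervalIntegral.integral_nonneg (by norm_num) (fun z _ => sq_nonneg _)
  have habs := abs_le.mp hRint
  rw [hLsplit, hRsplit] at hmain
  linarith [habs.1, habs.2]

/-- the key integral inequality (16) in the proof of Theorem 1.
There is a constant `K > 0`, depending only on `a` and `p`, such that for every bounded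
continuous coefficient `c` (with bound `Cb` on `[0,1]×[0,∞)`) and every `C¹` solution
`(w,u)` of the first-order system with boundary conditions `w(0,t) = p·u(0,t)`,
`u(1,t) = 0`, the function `W(t) = ‖w(·,t)‖_{L²(0,1)}` satisfies
`W(t) ≤ K · Cb · ∫_{t−4/a}^{t} W(τ) dτ` for `t > 4/a`. -/
theorem L2_norm_integral_inequality
    (a p : ℝ) (ha : 0 < a) :
    ∃ K > (0:ℝ),
      ∀ c : ℝ → ℝ → ℝ,
        Continuous (fun q : ℝ × ℝ => c q.1 q.2) →
        ∀ Cb : ℝ, (∀ x ∈ Set.Icc (0:ℝ) 1, ∀ s ≥ (0:ℝ), |c x s| ≤ Cb) →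
      ∀ w u : ℝ → ℝ → ℝ,
        ContDiff ℝ 1 (fun q : ℝ × ℝ => w q.1 q.2) →
        ContDiff ℝ 1 (fun q : ℝ × ℝ => u q.1 q.2) →
        -- ∂ₜw + a∂ₓw = u on (0,1)×(0,∞)
        (∀ x ∈ Set.Ioo (0:ℝ) 1, ∀ t > (0:ℝ),
          deriv (w x) t + a * deriv (fun y => w y t) x = u x t) →
        -- ∂ₜu − a∂ₓu + c·w = 0 on (0,1)×(0,∞)
        (∀ x ∈ Set.Ioo (0:ℝ) 1, ∀ t > (0:ℝ),
          deriv (u x) t - a * deriv (fun y => u y t) x + c x t * w x t = 0) →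
        -- boundary conditions
        (∀ t > (0:ℝ), w 0 t = p * u 0 t) →
        (∀ t > (0:ℝ), u 1 t = 0) →
      ∀ t > 4 / a,
        Real.sqrt (∫ x in (0:ℝ)..1, (w x t) ^ 2) ≤
          K * Cb * ∫ τ in (t - 4 / a)..t,
            Real.sqrt (∫ x in (0:ℝ)..1, (w x τ) ^ 2) := by
  refine ⟨Real.sqrt 3 * |p| + 1/a + 1, by positivity, ?_⟩
  intro c hcc Cb hCb w u hw hu pde1 pde2 bcw bcu t ht
  have h1a : 0 < 1/a := by positivity
  have hCb0 : 0 ≤ Cb := le_trans (abs_nonneg _) (hCb 0 ⟨le_rfl, by norm_num⟩ 0 le_rfl)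
  have hwc : Continuous (fun q : ℝ × ℝ => w q.1 q.2) := hw.continuous
  have huc : Continuous (fun q : ℝ × ℝ => u q.1 q.2) := hu.continuous
  set W : ℝ → ℝ := fun τ => Real.sqrt (∫ x in (0:ℝ)..1, (w x τ)^2) with hWdef
  set E : ℝ → ℝ := fun θ => Real.sqrt (∫ z in (0:ℝ)..1, (u z θ)^2) with hEdef
  have hWc : Continuous W := by
    apply Real.continuous_sqrt.comp
    apply continuous_parametric_intervalIntegral_of_continuous' (μ := volume)
    exact (hwc.comp (continuous_snd.prodMk continuous_fst)).pow 2
  have hEc : Continuous E := by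
    apply Real.continuous_sqrt.comp
    apply continuous_parametric_intervalIntegral_of_continuous' (μ := volume)
    exact (huc.comp (continuous_snd.prodMk continuous_fst)).pow 2
  have hWnn : ∀ τ, 0 ≤ W τ := fun τ => Real.sqrt_nonneg _
  have hEnn : ∀ θ, 0 ≤ E θ := fun θ => Real.sqrt_nonneg _
  have h4a : (4:ℝ)/a = 4*(1/a) := by ring
  have ht' : 4*(1/a) < t := by rw [← h4a]; exact ht
  set I : ℝ := ∫ τ in (t - 4/a)..t, W τ with hIdef
  have hInn : 0 ≤ I :=
    intervalIntegral.integral_nonneg (by rw [h4a]; linarith) (fun τ _ => hWnn τ)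
  have hCbI : 0 ≤ Cb * I := mul_nonneg hCb0 hInn
  -- The bound E θ ≤ Cb * I on [t - 2/a, t]
  have hEb : ∀ θ : ℝ, t - 2*(1/a) ≤ θ → θ ≤ t → E θ ≤ Cb * I := by
    intro θ hθ1 hθ2
    have hθa : 1/a < θ := by linarith
    have hrep : ∀ z ∈ Set.Icc (0:ℝ) 1,
        u z θ = -∫ s in (0:ℝ)..((1-z)/a), c (z+a*s) (θ-s) * w (z+a*s) (θ-s) :=
      fun z hz => u_rep a ha c w u (hcc.mul hwc) hu pde2 bcu z hz θ hθa
    refine le_trans (E_bound a Cb ha hCb0 c w u hcc hwc huc hCb hWc θ hθa hrep) ?_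
    apply mul_le_mul_of_nonneg_left ?_ hCb0
    rw [hIdef]
    apply intervalIntegral.integral_mono_interval (by rw [h4a]; linarith) (by linarith) hθ2
    · exact Filter.Eventually.of_forall (fun τ => hWnn τ)
    · exact hWc.intervalIntegrable _ _
  -- trace estimate
  have htr2 : a * ∫ θ in (t - 1/a)..t, (u 0 θ)^2 ≤ 3 * (Cb*I)^2 := by
    have htr := trace_bound a Cb ha hCb0 c w u hcc hwc hu hCb pde2 bcu
      (t - 1/a) t (by linarith) (by linarith)
    have hD1 : (∫ z in (0:ℝ)..1, (u z (t - 1/a))^2) ≤ (Cb*I)^2 := by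
      have h := hEb (t - 1/a) (by linarith) (by linarith)
      have hE2 : (E (t - 1/a))^2 = ∫ z in (0:ℝ)..1, (u z (t - 1/a))^2 :=
        Real.sq_sqrt (intervalIntegral.integral_nonneg (by norm_num) (fun z _ => sq_nonneg _))
      rw [← hE2]
      exact pow_le_pow_left₀ (hEnn _) h 2
    have hEW : (∫ θ in (t - 1/a)..t, E θ * W θ) ≤ (Cb*I) * I := by
      have step1 : (∫ θ in (t - 1/a)..t, E θ * W θ)
          ≤ ∫ θ in (t - 1/a)..t, (Cb*I) * W θ := by
        apply intervalIntegral.integral_mono_on (by linarith)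
        · exact (hEc.mul hWc).intervalIntegrable _ _
        · exact (continuous_const.mul hWc).intervalIntegrable _ _
        · intro θ hθ
          exact mul_le_mul_of_nonneg_right (hEb θ (by linarith [hθ.1]) hθ.2) (hWnn θ)
      have step2 : (∫ θ in (t - 1/a)..t, (Cb*I) * W θ) ≤ (Cb*I) * I := by
        rw [intervalIntegral.integral_const_mul]
        apply mul_le_mul_of_nonneg_left ?_ hCbI
        rw [hIdef]
        apply intervalIntegral.integral_mono_interval (by rw [h4a]; linarith)
          (by linarith) le_rfl
        · exact Filter.Eventually.of_forall (fun τ => hWnn τ)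
        · exact hWc.intervalIntegrable _ _
      exact le_trans step1 step2
    nlinarith [htr, hD1, hEW, hCb0, hInn]
  -- representation of w(·, t)
  set f : ℝ → ℝ := fun x => p * u 0 (t - x/a) with hfdef
  set g : ℝ → ℝ := fun x => ∫ s in (0:ℝ)..(x/a), u (x - a*s) (t - s) with hgdef
  have hrepw : ∀ x ∈ Set.Icc (0:ℝ) 1, w x t = f x + g x := by
    intro x hx
    exact w_rep a p ha w u hw hu pde1 bcw x hx t (by linarith)
  have hfc : Continuous f :=
    continuous_const.mul (huc.comp (continuous_const.prodMk
      (continuous_const.sub (continuous_id.div_const a))))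
  have hgc : Continuous g := by
    apply continuous_parametric_intervalIntegral_of_continuous (μ := volume)
    · exact huc.comp ((continuous_fst.sub (continuous_const.mul continuous_snd)).prodMk
        (continuous_const.sub continuous_snd))
    · exact continuous_id.div_const a
  -- squared norm of w(·,t)
  have hWt2 : (W t)^2 = ∫ x in (0:ℝ)..1, (f x + g x)^2 := by
    rw [hWdef]
    simp only
    rw [Real.sq_sqrt (intervalIntegral.integral_nonneg (by norm_num) (fun x _ => sq_nonneg _))]
    apply intervalIntegral.integral_congr
    intro x hx
    rw [Set.uIcc_of_le (by norm_num : (0:ℝ) ≤ 1)] at hx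
    show (w x t)^2 = (f x + g x)^2
    rw [hrepw x hx]
  -- triangle inequality in L²
  set Af : ℝ := ∫ x in (0:ℝ)..1, (f x)^2 with hAf
  set Ag : ℝ := ∫ x in (0:ℝ)..1, (g x)^2 with hAg
  have hAfnn : 0 ≤ Af :=
    intervalIntegral.integral_nonneg (by norm_num) (fun x _ => sq_nonneg _)
  have hAgnn : 0 ≤ Ag :=
    intervalIntegral.integral_nonneg (by norm_num) (fun x _ => sq_nonneg _)
  have htri : W t ≤ Real.sqrt Af + Real.sqrt Ag := by
    have hcs := cs_interval (by norm_num : (0:ℝ) ≤ 1) f g hfc hgc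
    have hexp : (∫ x in (0:ℝ)..1, (f x + g x)^2)
        = Af + 2 * (∫ x in (0:ℝ)..1, f x * g x) + Ag := by
      have e : ∀ x, (f x + g x)^2 = (f x)^2 + 2 * (f x * g x) + (g x)^2 := fun x => by ring
      simp_rw [e]
      have i1 : IntervalIntegrable (fun x => (f x)^2) volume 0 1 :=
        (hfc.pow 2).intervalIntegrable _ _
      have i2 : IntervalIntegrable (fun x => 2 * (f x * g x)) volume 0 1 :=
        (continuous_const.mul (hfc.mul hgc)).intervalIntegrable _ _
      have i3 : IntervalIntegrable (fun x => (g x)^2) volume 0 1 :=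
        (hgc.pow 2).intervalIntegrable _ _
      rw [intervalIntegral.integral_add (i1.add i2) i3, intervalIntegral.integral_add i1 i2,
        intervalIntegral.integral_const_mul]
    have hsq : (W t)^2 ≤ (Real.sqrt Af + Real.sqrt Ag)^2 := by
      rw [hWt2, hexp]
      have e2 : (Real.sqrt Af + Real.sqrt Ag)^2
          = Af + 2 * (Real.sqrt Af * Real.sqrt Ag) + Ag := by
        rw [add_sq, Real.sq_sqrt hAfnn, Real.sq_sqrt hAgnn]; ring
      rw [e2]
      linarith [hcs]
    calc W t = Real.sqrt ((W t)^2) := (Real.sqrt_sq (hWnn t)).symm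
      _ ≤ Real.sqrt ((Real.sqrt Af + Real.sqrt Ag)^2) := Real.sqrt_le_sqrt hsq
      _ = Real.sqrt Af + Real.sqrt Ag := Real.sqrt_sq (by positivity)
  -- term 1 : the boundary-trace term
  have hterm1 : Real.sqrt Af ≤ |p| * Real.sqrt 3 * (Cb * I) := by
    have hsub : Af = p^2 * (a * ∫ θ in (t - 1/a)..t, (u 0 θ)^2) := by
      rw [hAf, hfdef]
      simp only [mul_pow]
      rw [intervalIntegral.integral_const_mul]
      congr 1
      have h1 : (∫ x in (0:ℝ)..1, (u 0 (t - x/a))^2)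
          = a • ∫ y in (0:ℝ)/a..(1:ℝ)/a, (u 0 (t - y))^2 :=
        intervalIntegral.integral_comp_div (c := a)
          (f := fun y => (u 0 (t - y))^2) ha.ne'
      rw [h1, smul_eq_mul]
      congr 1
      have h2 := intervalIntegral.integral_comp_sub_left (a := (0:ℝ)/a) (b := 1/a)
        (fun θ => (u 0 θ)^2) t
      rw [h2]
      norm_num
    rw [hsub]
    have hle : p^2 * (a * ∫ θ in (t - 1/a)..t, (u 0 θ)^2) ≤ p^2 * (3 * (Cb*I)^2) :=
      mul_le_mul_of_nonneg_left htr2 (sq_nonneg p)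
    calc Real.sqrt (p^2 * (a * ∫ θ in (t - 1/a)..t, (u 0 θ)^2))
        ≤ Real.sqrt (p^2 * (3 * (Cb*I)^2)) := Real.sqrt_le_sqrt hle
      _ = |p| * Real.sqrt 3 * (Cb * I) := by
          rw [Real.sqrt_mul (sq_nonneg p), Real.sqrt_sq_eq_abs,
            Real.sqrt_mul (by norm_num : (0:ℝ) ≤ 3), Real.sqrt_sq hCbI]
          ring
  -- term 2 : the interior term
  have hterm2 : Real.sqrt Ag ≤ (1/a) * (Cb * I) := by
    have hpt : ∀ x ∈ Set.Icc (0:ℝ) 1,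
        (g x)^2 ≤ (1/a) * ∫ s in (0:ℝ)..(x/a), (u (x - a*s) (t - s))^2 := by
      intro x hx
      have hxa0 : 0 ≤ x/a := div_nonneg hx.1 ha.le
      have huint : Continuous (fun s => u (x - a*s) (t - s)) :=
        huc.comp ((continuous_const.sub (continuous_const.mul continuous_id)).prodMk
          (continuous_const.sub continuous_id))
      have hIabs : |g x| ≤ Real.sqrt (x/a)
          * Real.sqrt (∫ s in (0:ℝ)..(x/a), (u (x - a*s) (t - s))^2) := by
        have habs : |g x| ≤ ∫ s in (0:ℝ)..(x/a), |u (x - a*s) (t - s)| := by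
          rw [hgdef]
          exact intervalIntegral.abs_integral_le_integral_abs hxa0
        have hcs := cs_interval hxa0 (fun _ => (1:ℝ)) (fun s => |u (x - a*s) (t - s)|)
          continuous_const huint.abs
        simp only [one_mul] at hcs
        have h1 : (∫ s in (0:ℝ)..(x/a), ((1:ℝ))^2) = x/a := by simp
        rw [h1] at hcs
        simp_rw [sq_abs] at hcs
        exact le_trans habs hcs
      have h2 : (g x)^2 ≤ (x/a) * ∫ s in (0:ℝ)..(x/a), (u (x - a*s) (t - s))^2 := by
        have := mul_self_le_mul_self (abs_nonneg (g x)) hIabs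
        rw [← abs_mul, abs_mul_self] at this
        calc (g x)^2 = g x * g x := sq (g x) ▸ by ring
          _ ≤ (Real.sqrt (x/a) * Real.sqrt (∫ s in (0:ℝ)..(x/a), (u (x - a*s) (t - s))^2))
              * (Real.sqrt (x/a) * Real.sqrt (∫ s in (0:ℝ)..(x/a), (u (x - a*s) (t - s))^2)) := by
              calc g x * g x ≤ |g x * g x| := le_abs_self _
                _ = |g x| * |g x| := abs_mul _ _
                _ ≤ _ := mul_le_mul hIabs hIabs (abs_nonneg _) (by positivity)
          _ = (x/a) * ∫ s in (0:ℝ)..(x/a), (u (x - a*s) (t - s))^2 := by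
              rw [mul_mul_mul_comm, Real.mul_self_sqrt hxa0, Real.mul_self_sqrt
                (intervalIntegral.integral_nonneg hxa0 (fun s _ => sq_nonneg _))]
      refine le_trans h2 ?_
      apply mul_le_mul_of_nonneg_right ?_
        (intervalIntegral.integral_nonneg hxa0 (fun s _ => sq_nonneg _))
      rw [div_le_div_iff₀ ha ha]
      nlinarith [hx.2]
    have hswA : (∫ x in (0:ℝ)..1, ∫ s in (0:ℝ)..(x/a), (u (x - a*s) (t - s))^2)
        = ∫ z in (0:ℝ)..1, ∫ s in (0:ℝ)..((1 - z)/a), (u (1 - z - a*s) (t - s))^2 := by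
      have h0 := intervalIntegral.integral_comp_sub_left (a := (0:ℝ)) (b := 1)
        (fun x => ∫ s in (0:ℝ)..(x/a), (u (x - a*s) (t - s))^2) 1
      norm_num at h0
      rw [← h0]
    have hswB := swap_tri a ha (fun z s => (u (1 - z - a*s) (t - s))^2)
      ((huc.comp ((((continuous_const.sub continuous_fst).sub
        (continuous_const.mul continuous_snd))).prodMk
        (continuous_const.sub continuous_snd))).pow 2)
    have hinner : ∀ s ∈ Set.Icc (0:ℝ) (1/a),
        (∫ z in (0:ℝ)..(1 - a*s), (u (1 - z - a*s) (t - s))^2) ≤ (Cb*I)^2 := by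
      intro s hs
      have hL0 : (0:ℝ) ≤ 1 - a*s := by
        have : a * s ≤ a * (1/a) := mul_le_mul_of_nonneg_left hs.2 ha.le
        rw [mul_one_div, div_self ha.ne'] at this; linarith
      have hrev : (∫ z in (0:ℝ)..(1 - a*s), (u (1 - z - a*s) (t - s))^2)
          = ∫ y in (0:ℝ)..(1 - a*s), (u y (t - s))^2 := by
        have h0 := intervalIntegral.integral_comp_sub_left (a := (0:ℝ)) (b := 1 - a*s)
          (fun y => (u y (t - s))^2) (1 - a*s)
        norm_num at h0
        rw [← h0]
        apply intervalIntegral.integral_congr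
        intro z _
        have e : 1 - z - a*s = 1 - a*s - z := by ring
        show (u (1 - z - a*s) (t - s))^2 = (u (1 - a*s - z) (t - s))^2
        rw [e]
      rw [hrev]
      have h3 : (∫ y in (0:ℝ)..(1 - a*s), (u y (t - s))^2) ≤ (E (t - s))^2 := by
        rw [hEdef]
        simp only
        rw [Real.sq_sqrt (intervalIntegral.integral_nonneg (by norm_num)
          (fun z _ => sq_nonneg _))]
        apply intervalIntegral.integral_mono_interval le_rfl hL0
          (by nlinarith [mul_nonneg ha.le hs.1])
        · exact Filter.Eventually.of_forall fun y => sq_nonneg _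
        · exact ((huc.comp (continuous_id.prodMk continuous_const)).pow 2).intervalIntegrable _ _
      have h4 : E (t - s) ≤ Cb * I := hEb (t - s) (by linarith [hs.2]) (by linarith [hs.1])
      exact le_trans h3 (pow_le_pow_left₀ (hEnn _) h4 2)
    have htot : Ag ≤ (1/a) * ((1/a) * (Cb*I)^2) := by
      have s1 : Ag ≤ ∫ x in (0:ℝ)..1, (1/a) * ∫ s in (0:ℝ)..(x/a), (u (x - a*s) (t - s))^2 := by
        rw [hAg]
        apply intervalIntegral.integral_mono_on (by norm_num)
        · exact (hgc.pow 2).intervalIntegrable _ _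
        · apply Continuous.intervalIntegrable
          apply continuous_const.mul
          apply continuous_parametric_intervalIntegral_of_continuous (μ := volume)
          · exact (huc.comp ((continuous_fst.sub (continuous_const.mul continuous_snd)).prodMk
              (continuous_const.sub continuous_snd))).pow 2
          · exact continuous_id.div_const a
        · exact hpt
      have s2 : (∫ x in (0:ℝ)..1, (1/a) * ∫ s in (0:ℝ)..(x/a), (u (x - a*s) (t - s))^2)
          = (1/a) * ∫ s in (0:ℝ)..(1/a),
              ∫ z in (0:ℝ)..(1 - a*s), (u (1 - z - a*s) (t - s))^2 := by
        rw [intervalIntegral.integral_const_mul, hswA, hswB]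
      have s3 : (∫ s in (0:ℝ)..(1/a), ∫ z in (0:ℝ)..(1 - a*s), (u (1 - z - a*s) (t - s))^2)
          ≤ ∫ s in (0:ℝ)..(1/a), ((Cb*I)^2 : ℝ) := by
        apply intervalIntegral.integral_mono_on h1a.le
        · apply Continuous.intervalIntegrable
          apply continuous_parametric_intervalIntegral_of_continuous (μ := volume)
          · exact (huc.comp (((continuous_const.sub continuous_snd).sub
              (continuous_const.mul continuous_fst)).prodMk
              (continuous_const.sub continuous_fst))).pow 2
          · exact continuous_const.sub (continuous_const.mul continuous_id)
        · exact continuous_const.intervalIntegrable _ _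
        · exact hinner
      have s4 : (∫ s in (0:ℝ)..(1/a), ((Cb*I)^2 : ℝ)) = (1/a) * (Cb*I)^2 := by
        rw [intervalIntegral.integral_const]; simp [smul_eq_mul]
      calc Ag ≤ _ := s1
        _ = _ := s2
        _ ≤ (1/a) * ∫ s in (0:ℝ)..(1/a), ((Cb*I)^2:ℝ) := mul_le_mul_of_nonneg_left s3 h1a.le
        _ = (1/a) * ((1/a) * (Cb*I)^2) := by rw [s4]
    have e5 : (1/a) * ((1/a) * (Cb*I)^2) = ((1/a) * (Cb*I))^2 := by ring
    calc Real.sqrt Ag ≤ Real.sqrt (((1/a) * (Cb*I))^2) := by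
          rw [← e5]; exact Real.sqrt_le_sqrt htot
      _ = (1/a) * (Cb*I) := Real.sqrt_sq (by positivity)
  -- final assembly
  have hfinal : W t ≤ (Real.sqrt 3 * |p| + 1/a) * (Cb * I) := by
    calc W t ≤ Real.sqrt Af + Real.sqrt Ag := htri
      _ ≤ |p| * Real.sqrt 3 * (Cb*I) + (1/a) * (Cb*I) := add_le_add hterm1 hterm2
      _ = (Real.sqrt 3 * |p| + 1/a) * (Cb * I) := by ring
  calc W t ≤ (Real.sqrt 3 * |p| + 1/a) * (Cb * I) := hfinal
    _ ≤ (Real.sqrt 3 * |p| + 1/a + 1) * Cb * I := by nlinarith [hCbI]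
end

section
/- Let a > 0, p ∈ ℝ, and let a₁ : [0,1]×[0,∞) → ℝ be continuous and bounded. Let w : [0,1]×[0,∞) → ℝ be twice continuously differentiable and satisfy (∂_t − a ∂_x + a₁(x,t))(∂_t + a ∂_x) w = 0 on (0,1)×(0,∞), i.e., the function u := ∂_t w + a ∂_x w satisfies ∂_t u − a ∂_x u + a₁·u = 0 on (0,1)×(0,∞); suppose moreover that w(0,t) = p·(∂_t w + a ∂_x w)(0,t) and (∂_t w + a ∂_x w)(1,t) = 0 for all t > 0. Then w(x,t) = 0 for every x ∈ [0,1] and every t > 2/a. -/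
open Set Filter Topology

/-- partial derivative in second variable as fderiv applied to (0,1) -/
lemma pderiv_snd' {f : ℝ × ℝ → ℝ} {x t : ℝ} (hf : DifferentiableAt ℝ f (x, t)) :
    deriv (fun s => f (x, s)) t = fderiv ℝ f (x, t) (0, 1) :=
  (hf.hasFDerivAt.comp_hasDerivAt t ((hasDerivAt_const t x).prodMk (hasDerivAt_id t))).deriv

lemma pderiv_fst' {f : ℝ × ℝ → ℝ} {x t : ℝ} (hf : DifferentiableAt ℝ f (x, t)) :
    deriv (fun y => f (y, t)) x = fderiv ℝ f (x, t) (1, 0) :=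
  (hf.hasFDerivAt.comp_hasDerivAt x ((hasDerivAt_id x).prodMk (hasDerivAt_const x t))).deriv

/-- linear combination identity for fderiv -/
lemma fderiv_comb {f : ℝ × ℝ → ℝ} {q : ℝ × ℝ} (a : ℝ) :
    fderiv ℝ f q (a, 1) = a * fderiv ℝ f q (1, 0) + fderiv ℝ f q (0, 1) := by
  have : ((a, 1) : ℝ × ℝ) = a • ((1:ℝ), (0:ℝ)) + (0, 1) := by
    simp [Prod.ext_iff]
  rw [this, map_add, map_smul]; simp

lemma fderiv_comb' {f : ℝ × ℝ → ℝ} {q : ℝ × ℝ} (a : ℝ) :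
    fderiv ℝ f q (-a, 1) = fderiv ℝ f q (0, 1) - a * fderiv ℝ f q (1, 0) := by
  have : ((-a, 1) : ℝ × ℝ) = (0, 1) - a • ((1:ℝ), (0:ℝ)) := by
    simp [Prod.ext_iff]
  rw [this, map_sub, map_smul]; simp

/-- Gronwall: a function with `g' = c g` on the open interval, continuous up to the left
endpoint where it vanishes, vanishes at the right endpoint. -/
lemma gronwall_zero {g c : ℝ → ℝ} {t₀ T B : ℝ} (hB : 0 ≤ B) (hT : t₀ < T)
    (hcont : ContinuousOn g (Icc t₀ T)) (hg0 : g t₀ = 0)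
    (hderiv : ∀ s ∈ Ioo t₀ T, HasDerivAt g (c s * g s) s)
    (hbound : ∀ s ∈ Ioo t₀ T, |c s| ≤ B) : g T = 0 := by
  have key : ∀ s₁ ∈ Ioo t₀ T, |g T| ≤ |g s₁| * Real.exp (B * (T - t₀)) := by
    intro s₁ hs₁
    have h1 : ∀ s ∈ Ico s₁ T, HasDerivWithinAt g (c s * g s) (Ici s) s := by
      intro s hs
      exact (hderiv s ⟨lt_of_lt_of_le hs₁.1 hs.1, hs.2⟩).hasDerivWithinAt
    have h2 : ∀ s ∈ Ico s₁ T, ‖c s * g s‖ ≤ B * ‖g s‖ + 0 := by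
      intro s hs
      have := hbound s ⟨lt_of_lt_of_le hs₁.1 hs.1, hs.2⟩
      rw [add_zero]
      calc ‖c s * g s‖ = |c s| * ‖g s‖ := by rw [Real.norm_eq_abs, Real.norm_eq_abs, abs_mul]
        _ ≤ B * ‖g s‖ := by apply mul_le_mul_of_nonneg_right this (norm_nonneg _)
    have := norm_le_gronwallBound_of_norm_deriv_right_le
      (hcont.mono (Icc_subset_Icc hs₁.1.le le_rfl)) h1 le_rfl h2 T ⟨hs₁.2.le, le_rfl⟩
    rw [gronwallBound_ε0] at this
    calc |g T| = ‖g T‖ := rfl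
      _ ≤ ‖g s₁‖ * Real.exp (B * (T - s₁)) := this
      _ ≤ |g s₁| * Real.exp (B * (T - t₀)) := by
          apply mul_le_mul_of_nonneg_left _ (abs_nonneg _)
          exact Real.exp_le_exp.2 (mul_le_mul_of_nonneg_left (by linarith [hs₁.1]) hB)
  have hne : (𝓝[Ioo t₀ T] t₀).NeBot := by
    apply mem_closure_iff_nhdsWithin_neBot.1
    rw [closure_Ioo hT.ne]
    exact ⟨le_rfl, hT.le⟩
  have htend : Tendsto (fun s₁ => |g s₁| * Real.exp (B * (T - t₀))) (𝓝[Ioo t₀ T] t₀)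
      (𝓝 (|g t₀| * Real.exp (B * (T - t₀)))) := by
    apply Tendsto.mul_const
    apply Tendsto.abs
    exact (hcont t₀ ⟨le_rfl, hT.le⟩).tendsto.mono_left
      (nhdsWithin_mono _ (Ioo_subset_Icc_self))
  rw [hg0, abs_zero, zero_mul] at htend
  have : |g T| ≤ 0 := ge_of_tendsto htend (eventually_nhdsWithin_of_forall key)
  exact abs_eq_zero.1 (le_antisymm this (abs_nonneg _))


/-- finite time extinction for the unperturbed generalized equation (18).
Let `a > 0`, `p ∈ ℝ`, `a₁` continuous and bounded. If `w` is `C²` and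
`u := ∂ₜw + a∂ₓw` satisfies `∂ₜu − a∂ₓu + a₁·u = 0` on `(0,1)×(0,∞)`, with boundary
conditions `w(0,t) = p·(wₜ + a wₓ)(0,t)` and `(wₜ + a wₓ)(1,t) = 0` for `t > 0`, then
`w(x,t) = 0` for all `x ∈ [0,1]` and `t > 2/a`. -/
theorem generalized_wave_finite_time_extinction
    (a p : ℝ) (ha : 0 < a)
    (a₁ : ℝ → ℝ → ℝ)
    (ha₁ : Continuous (fun q : ℝ × ℝ => a₁ q.1 q.2))
    (ha₁b : ∃ B : ℝ, ∀ x ∈ Set.Icc (0:ℝ) 1, ∀ t ≥ (0:ℝ), |a₁ x t| ≤ B)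
    (w : ℝ → ℝ → ℝ)
    (hw : ContDiff ℝ 2 (fun q : ℝ × ℝ => w q.1 q.2))
    -- (∂ₜ − a∂ₓ + a₁)(∂ₜ + a∂ₓ)w = 0 on (0,1)×(0,∞), i.e. u := ∂ₜw + a∂ₓw satisfies
    -- ∂ₜu − a∂ₓu + a₁·u = 0 there
    (hpde : ∀ x ∈ Set.Ioo (0:ℝ) 1, ∀ t > (0:ℝ),
      deriv (fun s => deriv (w x) s + a * deriv (fun y => w y s) x) t
        - a * deriv (fun y => deriv (w y) t + a * deriv (fun z => w z t) y) x
        + a₁ x t * (deriv (w x) t + a * deriv (fun y => w y t) x) = 0)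
    -- boundary condition at x = 0 : w(0,t) = p (wₜ + a wₓ)(0,t)
    (hbc0 : ∀ t > (0:ℝ),
      w 0 t = p * (deriv (w 0) t + a * deriv (fun y => w y t) 0))
    -- boundary condition at x = 1 : (wₜ + a wₓ)(1,t) = 0
    (hbc1 : ∀ t > (0:ℝ), deriv (w 1) t + a * deriv (fun y => w y t) 1 = 0) :
    ∀ x ∈ Set.Icc (0:ℝ) 1, ∀ t > 2 / a, w x t = 0 := by
  obtain ⟨B₀, hB₀⟩ := ha₁b
  set B : ℝ := max B₀ 0 with hBdef
  have hB : 0 ≤ B := le_max_right _ _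
  set W : ℝ × ℝ → ℝ := fun q => w q.1 q.2 with hWdef
  set U : ℝ × ℝ → ℝ := fun q => fderiv ℝ W q (a, 1) with hUdef
  have hWdiff : Differentiable ℝ W := hw.differentiable two_ne_zero
  have hU1 : ContDiff ℝ 1 U := by
    have h1 : ContDiff ℝ 1 (fderiv ℝ W) := hw.fderiv_right (by norm_num)
    exact h1.clm_apply contDiff_const
  have hUdiff : Differentiable ℝ U := hU1.differentiable one_ne_zero
  have hUcont : Continuous U := hU1.continuous
  have key : ∀ x t : ℝ, deriv (w x) t + a * deriv (fun y => w y t) x = U (x, t) := by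
    intro x t
    have h1 : deriv (w x) t = fderiv ℝ W (x, t) (0, 1) := pderiv_snd' (hWdiff (x, t))
    have h2 : deriv (fun y => w y t) x = fderiv ℝ W (x, t) (1, 0) := pderiv_fst' (hWdiff (x, t))
    have h3 : U (x, t) = fderiv ℝ W (x, t) (a, 1) := rfl
    rw [h1, h2, h3, fderiv_comb a]; ring
  have hbc0' : ∀ t > (0:ℝ), w 0 t = p * U (0, t) := fun t ht => by rw [← key]; exact hbc0 t ht
  have hbc1' : ∀ t > (0:ℝ), U (1, t) = 0 := fun t ht => by rw [← key]; exact hbc1 t ht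
  have hpde' : ∀ x ∈ Set.Ioo (0:ℝ) 1, ∀ t > (0:ℝ),
      fderiv ℝ U (x, t) (-a, 1) = -(a₁ x t) * U (x, t) := by
    intro x hx t ht
    have e1 : (fun s => deriv (w x) s + a * deriv (fun y => w y s) x) = fun s => U (x, s) := by
      funext s; exact key x s
    have e2 : (fun y => deriv (w y) t + a * deriv (fun z => w z t) y) = fun y => U (y, t) := by
      funext y; exact key y t
    have h := hpde x hx t ht
    rw [e1, e2, key] at h
    have h1 : deriv (fun s => U (x, s)) t = fderiv ℝ U (x, t) (0, 1) := pderiv_snd' (hUdiff (x, t))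
    have h2 : deriv (fun y => U (y, t)) x = fderiv ℝ U (x, t) (1, 0) := pderiv_fst' (hUdiff (x, t))
    rw [h1, h2] at h
    rw [fderiv_comb' a]
    linarith
  -- u vanishes on [0,1] × (1/a, ∞)
  have u0 : ∀ x ∈ Set.Icc (0:ℝ) 1, ∀ t : ℝ, 1 / a < t → U (x, t) = 0 := by
    have upos : ∀ x ∈ Set.Ioc (0:ℝ) 1, ∀ t : ℝ, 1 / a < t → U (x, t) = 0 := by
      intro x hx t ht
      have hapos : (0:ℝ) < 1 / a := by positivity
      have htpos : 0 < t := lt_trans hapos ht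
      have hat : 1 < a * t := (div_lt_iff₀' ha).1 ht
      rcases eq_or_lt_of_le hx.2 with hx1 | hx1
      · rw [hx1]; exact hbc1' t htpos
      · set t₀ : ℝ := t - (1 - x) / a with ht₀def
        have hxa : (1 - x) / a < t := by
          rw [div_lt_iff₀ ha]; linarith [hx.1, mul_comm t a]
        have ht₀pos : 0 < t₀ := by rw [ht₀def]; linarith
        have htt₀ : t₀ < t := by
          rw [ht₀def]
          have : 0 < (1 - x) / a := div_pos (by linarith) ha
          linarith
        have hcancel : a * (t - t₀) = 1 - x := by
          rw [ht₀def]; field_simp; ring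
        set g : ℝ → ℝ := fun s => U (1 - a * (s - t₀), s) with hgdef
        set c : ℝ → ℝ := fun s => -(a₁ (1 - a * (s - t₀)) s) with hcdef
        have hg0 : g t₀ = 0 := by
          show U (1 - a * (t₀ - t₀), t₀) = 0
          rw [show (1:ℝ) - a * (t₀ - t₀) = 1 by ring]
          exact hbc1' t₀ ht₀pos
        have hcoord : ∀ s ∈ Set.Ioo t₀ t, (1 - a * (s - t₀)) ∈ Set.Ioo (0:ℝ) 1 := by
          intro s hs
          constructor
          · have h1 : a * (s - t₀) < a * (t - t₀) := by
              apply mul_lt_mul_of_pos_left _ ha; linarith [hs.2]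
            rw [hcancel] at h1; linarith [hx.1]
          · have h1 : 0 < a * (s - t₀) := by
              apply mul_pos ha; linarith [hs.1]
            linarith
        have hderiv : ∀ s ∈ Set.Ioo t₀ t, HasDerivAt g (c s * g s) s := by
          intro s hs
          have hc1 : HasDerivAt (fun s => 1 - a * (s - t₀)) (-a) s := by
            simpa using (((hasDerivAt_id s).sub_const t₀).const_mul a).const_sub 1
          have hcurve : HasDerivAt (fun s => ((1 - a * (s - t₀), s) : ℝ × ℝ)) ((-a, 1) : ℝ × ℝ) s :=
            hc1.prodMk (hasDerivAt_id s)
          have hgd : HasDerivAt g (fderiv ℝ U (1 - a * (s - t₀), s) (-a, 1)) s :=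
            (hUdiff _).hasFDerivAt.comp_hasDerivAt s hcurve
          rw [hpde' _ (hcoord s hs) s (lt_trans ht₀pos hs.1)] at hgd
          exact hgd
        have hbound : ∀ s ∈ Set.Ioo t₀ t, |c s| ≤ B := by
          intro s hs
          have h1 := hcoord s hs
          have h2 := hB₀ (1 - a * (s - t₀)) ⟨h1.1.le, h1.2.le⟩ s (le_of_lt (lt_trans ht₀pos hs.1))
          rw [hcdef]; simp only [abs_neg]
          exact le_trans h2 (le_max_left _ _)
        have hcont : ContinuousOn g (Set.Icc t₀ t) := by
          apply Continuous.continuousOn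
          exact hUcont.comp (by fun_prop)
        have hgt := gronwall_zero hB htt₀ hcont hg0 hderiv hbound
        have hgt' : U (1 - a * (t - t₀), t) = 0 := hgt
        rwa [show (1 : ℝ) - a * (t - t₀) = x from by rw [hcancel]; ring] at hgt'
    intro x hx t ht
    rcases eq_or_lt_of_le hx.1 with h0 | h0
    · have hcont0 : Filter.Tendsto (fun y => U (y, t)) (nhdsWithin 0 (Set.Ioi 0)) (nhds (U (0, t))) :=
        ((hUcont.comp (continuous_id.prodMk continuous_const)).tendsto 0).mono_left
          nhdsWithin_le_nhds
      have hev : ∀ᶠ y in nhdsWithin 0 (Set.Ioi 0), (fun y => U (y, t)) y = 0 := by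
        filter_upwards [Ioo_mem_nhdsGT_of_mem (Set.mem_Ico.2 ⟨le_rfl, one_pos⟩)] with y hy
        exact upos y ⟨hy.1, hy.2.le⟩ t ht
      have hzero : Filter.Tendsto (fun y => U (y, t)) (nhdsWithin 0 (Set.Ioi 0)) (nhds 0) :=
        Filter.Tendsto.congr' (hev.mono fun y hy => hy.symm) tendsto_const_nhds
      have := tendsto_nhds_unique hcont0 hzero
      rw [← h0]; exact this
    · exact upos x ⟨h0, hx.2⟩ t ht
  -- finite time extinction for w
  intro x hx t ht
  have hapos : (0:ℝ) < 1 / a := by positivity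
  set t₀ : ℝ := t - x / a with ht₀def
  have hxa : x / a ≤ 1 / a := by gcongr; exact hx.2
  have h2a : 2 / a - 1 / a = 1 / a := by ring
  have h1a : 1 / a < t₀ := by rw [ht₀def]; linarith
  have ht₀pos : 0 < t₀ := lt_trans hapos h1a
  have ht₀t : t₀ ≤ t := by
    have : 0 ≤ x / a := div_nonneg hx.1 ha.le
    rw [ht₀def]; linarith
  have hcancel : a * (t - t₀) = x := by
    rw [ht₀def]; field_simp; ring
  set h : ℝ → ℝ := fun s => W (a * (s - t₀), s) with hhdef
  have hderiv : ∀ s ∈ Set.Ico t₀ t, HasDerivWithinAt h 0 (Set.Ici s) s := by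
    intro s hs
    have hc1 : HasDerivAt (fun s => a * (s - t₀)) a s := by
      simpa using ((hasDerivAt_id s).sub_const t₀).const_mul a
    have hcurve : HasDerivAt (fun s => ((a * (s - t₀), s) : ℝ × ℝ)) ((a, 1) : ℝ × ℝ) s :=
      hc1.prodMk (hasDerivAt_id s)
    have hhd : HasDerivAt h (fderiv ℝ W (a * (s - t₀), s) (a, 1)) s :=
      (hWdiff _).hasFDerivAt.comp_hasDerivAt s hcurve
    have hcoord : a * (s - t₀) ∈ Set.Icc (0:ℝ) 1 := by
      constructor
      · have h0 : 0 ≤ s - t₀ := by linarith [hs.1]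
        exact mul_nonneg ha.le h0
      · have h1 : a * (s - t₀) ≤ a * (t - t₀) := by
          apply mul_le_mul_of_nonneg_left _ ha.le; linarith [hs.2]
        rw [hcancel] at h1; linarith [hx.2]
    have hhd' : HasDerivAt h (U (a * (s - t₀), s)) s := hhd
    rw [u0 _ hcoord s (lt_of_lt_of_le h1a hs.1)] at hhd'
    exact hhd'.hasDerivWithinAt
  have hcont : ContinuousOn h (Set.Icc t₀ t) := by
    apply Continuous.continuousOn
    exact hw.continuous.comp (by fun_prop)
  have hconst := constant_of_has_deriv_right_zero hcont hderiv t ⟨ht₀t, le_rfl⟩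
  have e1 : h t = w x t := by
    show W (a * (t - t₀), t) = w x t
    rw [hcancel]
  have e2 : h t₀ = 0 := by
    show W (a * (t₀ - t₀), t₀) = 0
    rw [show a * (t₀ - t₀) = 0 by ring]
    show w 0 t₀ = 0
    rw [hbc0' t₀ ht₀pos, u0 0 ⟨le_rfl, zero_le_one⟩ t₀ h1a, mul_zero]
  rw [← e1, hconst, e2]
end
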